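/- For every fractional order α ∈ (0,1), every tolerance ε > 0, every cut-off time Δt with 0 < Δt < T, there exist a positive integer N_q, positive quadrature nodes θ^1, …, θ^{N_q} and positive weights ϖ^1, …, ϖ^{N_q} such that |ω_{1−α}(t) − Σ_{ℓ=1}^{N_q} ϖ^ℓ e^{−θ^ℓ t}| ≤ ε for all t ∈ [Δt, T]. -/

import Mathlib

/-!
STATEMENT 1: Sum-of-exponentials approximation of the kernel
`ω_{1−α}(t) = t^{−α}/Γ(1−α)` on `[Δt, T]` within any tolerance `ε`.
-/

open Real

/-- `ω_μ(s) := s^{μ−1}/Γ(μ)`. -/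
noncomputable def omega (μ s : ℝ) : ℝ := s ^ (μ - 1) / Real.Gamma μ

set_option maxHeartbeats 1000000

section SoeAux
open MeasureTheory Set intervalIntegral

lemma soe_exp_lip {u v : ℝ} (hu : 0 ≤ u) (h : u ≤ v) :
    |Real.exp (-u) - Real.exp (-v)| ≤ v - u := by
  have h2 : Real.exp (-u) ≤ 1 := Real.exp_le_one_iff.mpr (by linarith)
  have h3 : Real.exp (-v) = Real.exp (-u) * Real.exp (-(v - u)) := by
    rw [← Real.exp_add]; ring_nf
  have h4 : -(v - u) + 1 ≤ Real.exp (-(v - u)) := Real.add_one_le_exp _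
  have h5 : Real.exp (-v) ≤ Real.exp (-u) := Real.exp_le_exp.2 (by linarith)
  rw [abs_of_nonneg (by linarith)]
  nlinarith [Real.exp_pos (-u), Real.exp_pos (-(v - u))]

lemma soe_integrable {α : ℝ} (hα0 : 0 < α) {s : ℝ} (hs : 0 < s) :
    IntegrableOn (fun θ : ℝ => θ ^ (α - 1) * Real.exp (-(s * θ))) (Ioi 0) := by
  have h0 : IntegrableOn (fun x : ℝ => Real.exp (-x) * x ^ (α - 1)) (Ioi 0) :=
    Real.GammaIntegral_convergent hα0
  have h1 : IntegrableOn (fun t : ℝ => Real.exp (-(s * t)) * (s * t) ^ (α - 1)) (Ioi 0) := by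
    have := (MeasureTheory.integrableOn_Ioi_comp_mul_left_iff
      (fun x : ℝ => Real.exp (-x) * x ^ (α - 1)) 0 hs).2
    simpa using this (by simpa using h0)
  have h2 := (h1.const_mul (s ^ (1 - α)))
  refine MeasureTheory.IntegrableOn.congr_fun h2 (fun t ht => ?_) measurableSet_Ioi
  have hts : (s * t) ^ (α - 1) = s ^ (α - 1) * t ^ (α - 1) :=
    Real.mul_rpow hs.le (le_of_lt ht)
  have hss : s ^ (1 - α) * s ^ (α - 1) = 1 := by
    rw [← Real.rpow_add hs]; norm_num
  rw [hts]
  calc s ^ (1 - α) * (Real.exp (-(s * t)) * (s ^ (α - 1) * t ^ (α - 1)))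
      = (s ^ (1 - α) * s ^ (α - 1)) * (t ^ (α - 1) * Real.exp (-(s * t))) := by ring
    _ = t ^ (α - 1) * Real.exp (-(s * t)) := by rw [hss, one_mul]

end SoeAux

open MeasureTheory Set intervalIntegral in
theorem soe_approximation
    (α ε Δt T : ℝ) (hα0 : 0 < α) (hα1 : α < 1) (hε : 0 < ε)
    (hΔt : 0 < Δt) (hΔtT : Δt < T) :
    ∃ (Nq : ℕ) (θ ϖ : ℕ → ℝ), 1 ≤ Nq ∧
      (∀ ℓ, 1 ≤ ℓ → ℓ ≤ Nq → 0 < θ ℓ ∧ 0 < ϖ ℓ) ∧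
      ∀ s ∈ Set.Icc Δt T,
        |omega (1 - α) s - ∑ ℓ ∈ Finset.Icc 1 Nq, ϖ ℓ * Real.exp (-(θ ℓ) * s)| ≤ ε := by
  have hT : 0 < T := hΔt.trans hΔtT
  have hΓα : 0 < Real.Gamma α := Real.Gamma_pos_of_pos hα0
  have hΓ1α : 0 < Real.Gamma (1 - α) := Real.Gamma_pos_of_pos (by linarith)
  set C : ℝ := Real.Gamma (1 - α) * Real.Gamma α with hCdef
  have hCpos : 0 < C := mul_pos hΓ1α hΓα
  set δ : ℝ := ε * C with hδdef
  have hδpos : 0 < δ := mul_pos hε hCpos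
  set f : ℝ → ℝ → ℝ := fun s θ => θ ^ (α - 1) * Real.exp (-(s * θ)) with hfdef
  have hfnonneg : ∀ s : ℝ, ∀ θ : ℝ, 0 ≤ θ → 0 ≤ f s θ := fun s θ hθ =>
    mul_nonneg (Real.rpow_nonneg hθ _) (Real.exp_pos _).le
  -- choice of a
  set a : ℝ := min 1 ((δ * α / 3) ^ α⁻¹) with hadef
  have hapos : 0 < a := lt_min one_pos (Real.rpow_pos_of_pos (by positivity) _)
  have haε : a ^ α / α ≤ δ / 3 := by
    have h1 : a ^ α ≤ ((δ * α / 3) ^ α⁻¹) ^ α :=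
      Real.rpow_le_rpow hapos.le (min_le_right _ _) hα0.le
    rw [Real.rpow_inv_rpow (by positivity) hα0.ne'] at h1
    rw [div_le_iff₀ hα0]
    calc a ^ α ≤ δ * α / 3 := h1
      _ = δ / 3 * α := by ring
  -- constant for the infinite tail
  set K : ℝ := (1 / (Δt / 2)) ^ α * Real.Gamma α with hKdef
  have hKpos : 0 < K := by positivity
  have hKval : ∫ θ in Ioi 0, f (Δt / 2) θ = K := by
    rw [hfdef]
    exact Real.integral_rpow_mul_exp_neg_mul_Ioi hα0 (half_pos hΔt)
  -- choice of b
  set b : ℝ := max (a + 1) (2 * Real.log (3 * K / δ) / Δt) with hbdef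
  have hba : a < b := lt_of_lt_of_le (by linarith) (le_max_left _ _)
  have hbpos : 0 < b := hapos.trans hba
  have hbtail : Real.exp (-(Δt * b) / 2) * K ≤ δ / 3 := by
    have hlb : 2 * Real.log (3 * K / δ) / Δt ≤ b := le_max_right _ _
    have h1 : Real.log (3 * K / δ) ≤ Δt * b / 2 := by
      rw [div_le_iff₀ hΔt] at hlb; nlinarith
    have h2 : Real.exp (-(Δt * b) / 2) ≤ Real.exp (-(Real.log (3 * K / δ))) := by
      apply Real.exp_le_exp.2; linarith
    have h3 : Real.exp (-(Real.log (3 * K / δ))) = δ / (3 * K) := by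
      rw [Real.exp_neg, Real.exp_log (by positivity), inv_div]
    have h4 : Real.exp (-(Δt * b) / 2) ≤ δ / (3 * K) := h3 ▸ h2
    calc Real.exp (-(Δt * b) / 2) * K ≤ δ / (3 * K) * K :=
          mul_le_mul_of_nonneg_right h4 hKpos.le
      _ = δ / 3 := by field_simp
  -- choice of N
  set N : ℕ := Nat.ceil (3 * T * (b - a) * b ^ α / (δ * α)) + 1 with hNdef
  have hN1 : 1 ≤ N := Nat.le_add_left 1 _
  have hNpos : (0 : ℝ) < N := by positivity
  set h : ℝ := (b - a) / N with hhdef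
  have hhpos : 0 < h := div_pos (sub_pos.2 hba) hNpos
  have hhN : (N : ℝ) * h = b - a := by
    rw [hhdef]; field_simp
  -- the bound coming from the choice of N
  have hNineq : T * h * (b ^ α) / α ≤ δ / 3 := by
    have hr : 3 * T * (b - a) * b ^ α / (δ * α) ≤ (N : ℝ) := by
      have h1 := Nat.le_ceil (3 * T * (b - a) * b ^ α / (δ * α))
      have h2 : ((Nat.ceil (3 * T * (b - a) * b ^ α / (δ * α)) : ℕ) : ℝ) ≤ N := by
        rw [hNdef]; push_cast; linarith
      linarith
    have e1 : 3 * T * (b - a) * b ^ α ≤ δ * α * N := by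
      rw [div_le_iff₀ (by positivity)] at hr; linarith
    have e2 : (3 * T * h * b ^ α) * N ≤ (δ * α) * N := by
      calc (3 * T * h * b ^ α) * N = 3 * T * ((N:ℝ) * h) * b ^ α := by ring
        _ = 3 * T * (b - a) * b ^ α := by rw [hhN]
        _ ≤ δ * α * N := e1
        _ = (δ * α) * N := by ring
    have e3 : 3 * T * h * b ^ α ≤ δ * α := le_of_mul_le_mul_right e2 hNpos
    rw [div_le_div_iff₀ hα0 (by norm_num : (0:ℝ) < 3)]
    linarith
  set x : ℕ → ℝ := fun i => a + i * h with hxdef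
  have hx0 : x 0 = a := by simp [hxdef]
  have hxN : x N = b := by
    simp only [hxdef]
    linear_combination hhN
  have hxpos : ∀ i : ℕ, 0 < x i := fun i => by
    have : (0:ℝ) ≤ (i:ℝ) * h := mul_nonneg (Nat.cast_nonneg i) hhpos.le
    simp only [hxdef]; linarith
  have hxsucc : ∀ i : ℕ, x (i + 1) = x i + h := fun i => by
    simp only [hxdef]; push_cast; ring
  -- the weights
  set w : ℕ → ℝ := fun ℓ => (x ℓ ^ α - (x ℓ - h) ^ α) / α with hwdef
  have hwpos : ∀ ℓ : ℕ, 1 ≤ ℓ → 0 < w ℓ := by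
    intro ℓ hℓ
    have hprev : x ℓ - h = x (ℓ - 1) := by
      obtain ⟨m, rfl⟩ := Nat.exists_eq_add_of_le hℓ
      rw [Nat.add_sub_cancel_left, add_comm 1 m, hxsucc m]; ring
    have h1 : 0 < x ℓ - h := hprev ▸ hxpos (ℓ - 1)
    have h2 : (x ℓ - h) ^ α < x ℓ ^ α :=
      Real.rpow_lt_rpow h1.le (by linarith) hα0
    rw [hwdef]
    exact div_pos (by linarith) hα0
  have hwsucc : ∀ i : ℕ, w (i + 1) = x (i + 1) ^ α / α - x i ^ α / α := by
    intro i
    rw [hwdef]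
    simp only
    rw [hxsucc i, add_sub_cancel_right]
    ring
  -- now forget the actual values
  clear_value C δ f a K b N h x w
  clear hadef hbdef hNdef hhdef hxdef hwdef hKdef
  have hwsum : ∑ i ∈ Finset.range N, w (i + 1) = b ^ α / α - a ^ α / α := by
    have h1 := Finset.sum_range_sub (fun j => x j ^ α / α) N
    rw [hx0, hxN] at h1
    rw [← h1]
    exact Finset.sum_congr rfl fun i _ => hwsucc i
  have hrint : ∀ (y z : ℝ), IntervalIntegrable (fun t : ℝ => t ^ (α - 1)) volume y z :=
    fun y z => intervalIntegrable_rpow' (by linarith)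
  have hxlt : ∀ i : ℕ, x i < x (i + 1) := fun i => by rw [hxsucc]; linarith
  have hwint : ∀ i : ℕ, ∫ t in x i..x (i + 1), t ^ (α - 1) = w (i + 1) := by
    intro i
    rw [integral_rpow (Or.inl (by linarith))]
    have h1 : α - 1 + 1 = α := by ring
    rw [h1, hwsucc i]
    ring
  -- the quadrature
  refine ⟨N, x, fun ℓ => w ℓ / C, hN1,
    fun ℓ hℓ _ => ⟨hxpos ℓ, div_pos (hwpos ℓ hℓ) hCpos⟩, ?_⟩
  rintro s ⟨hs1, hs2⟩
  have hs0 : 0 < s := hΔt.trans_le hs1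
  have hInt : IntegrableOn (f s) (Ioi 0) := by rw [hfdef]; exact soe_integrable hα0 hs0
  have hgInt : IntegrableOn (f (Δt / 2)) (Ioi 0) := by
    rw [hfdef]; exact soe_integrable hα0 (half_pos hΔt)
  -- the Gamma identity
  have homega : omega (1 - α) s = (∫ θ in Ioi 0, f s θ) / C := by
    rw [hfdef]
    rw [Real.integral_rpow_mul_exp_neg_mul_Ioi hα0 hs0]
    rw [one_div, Real.inv_rpow hs0.le, omega, hCdef]
    have h1 : (1 : ℝ) - α - 1 = -α := by ring
    rw [h1, Real.rpow_neg hs0.le]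
    field_simp
  -- continuity of f s on positive reals
  have hfc : ContinuousOn (f s) (Ioi 0) := by
    rw [hfdef]
    intro θ hθ
    have h1 : ContinuousAt (fun t : ℝ => t ^ (α - 1)) θ :=
      Real.continuousAt_rpow_const θ (α - 1) (Or.inl (ne_of_gt hθ))
    have h2 : Continuous fun t : ℝ => Real.exp (-(s * t)) := by fun_prop
    exact (h1.mul h2.continuousAt).continuousWithinAt
  have hcellsub : ∀ i : ℕ, Set.uIcc (x i) (x (i + 1)) ⊆ Ioi 0 := by
    intro i t ht
    rw [Set.uIcc_of_le (hxlt i).le] at ht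
    exact lt_of_lt_of_le (hxpos i) ht.1
  have hFint : ∀ i : ℕ, IntervalIntegrable (f s) volume (x i) (x (i + 1)) :=
    fun i => (hfc.mono (hcellsub i)).intervalIntegrable
  -- cell error bound
  have hcell : ∀ i : ℕ,
      |(∫ t in x i..x (i + 1), f s t) - w (i + 1) * Real.exp (-(s * x (i + 1)))| ≤
        w (i + 1) * (T * h) := by
    intro i
    have hle : x i ≤ x (i + 1) := (hxlt i).le
    have hgint : IntervalIntegrable
        (fun t : ℝ => t ^ (α - 1) * Real.exp (-(s * x (i + 1)))) volume (x i) (x (i + 1)) :=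
      (hrint _ _).mul_const _
    have heq : (∫ t in x i..x (i + 1), f s t) - w (i + 1) * Real.exp (-(s * x (i + 1)))
        = ∫ t in x i..x (i + 1),
            t ^ (α - 1) * (Real.exp (-(s * t)) - Real.exp (-(s * x (i + 1)))) := by
      have hcongr : ∫ t in x i..x (i + 1),
            t ^ (α - 1) * (Real.exp (-(s * t)) - Real.exp (-(s * x (i + 1))))
          = ∫ t in x i..x (i + 1),
              (f s t - t ^ (α - 1) * Real.exp (-(s * x (i + 1)))) := by
        refine intervalIntegral.integral_congr fun t _ => ?_
        rw [hfdef]; ring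
      rw [hcongr, intervalIntegral.integral_sub (hFint i) hgint,
        intervalIntegral.integral_mul_const, hwint i]
    rw [heq]
    have habs := intervalIntegral.abs_integral_le_integral_abs (μ := volume)
      (f := fun t => t ^ (α - 1) * (Real.exp (-(s * t)) - Real.exp (-(s * x (i + 1))))) hle
    refine le_trans habs ?_
    have hbound : ∀ t ∈ Set.Icc (x i) (x (i + 1)),
        |t ^ (α - 1) * (Real.exp (-(s * t)) - Real.exp (-(s * x (i + 1))))| ≤
          t ^ (α - 1) * (T * h) := by
      intro t ht
      have htpos : 0 < t := lt_of_lt_of_le (hxpos i) ht.1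
      rw [abs_mul, abs_of_nonneg (Real.rpow_nonneg htpos.le _)]
      refine mul_le_mul_of_nonneg_left ?_ (Real.rpow_nonneg htpos.le _)
      have h1 : s * t ≤ s * x (i + 1) := mul_le_mul_of_nonneg_left ht.2 hs0.le
      have h2 := soe_exp_lip (mul_nonneg hs0.le htpos.le) h1
      refine h2.trans ?_
      have h3 : x (i + 1) - t ≤ h := by
        have h4 := ht.1; rw [hxsucc i]; linarith
      have h5 : 0 ≤ x (i + 1) - t := by linarith [ht.2]
      calc s * x (i + 1) - s * t = s * (x (i + 1) - t) := by ring
        _ ≤ T * h := mul_le_mul hs2 h3 h5 hT.le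
    have hint1 : IntervalIntegrable
        (fun t : ℝ => |t ^ (α - 1) * (Real.exp (-(s * t)) - Real.exp (-(s * x (i + 1))))|)
        volume (x i) (x (i + 1))  := by
      have h6 : IntervalIntegrable
          (fun t : ℝ => t ^ (α - 1) * (Real.exp (-(s * t)) - Real.exp (-(s * x (i + 1)))))
          volume (x i) (x (i + 1)) := by
        have h7 := (hFint i).sub ((hrint (x i) (x (i+1))).mul_const
          (Real.exp (-(s * x (i + 1)))))
        refine h7.congr ?_
        intro t _
        simp only [hfdef]; ring
      exact h6.abs
    have hint2 : IntervalIntegrable (fun t : ℝ => t ^ (α - 1) * (T * h)) volume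
        (x i) (x (i + 1)) := (hrint _ _).mul_const _
    calc (∫ t in x i..x (i + 1),
            |t ^ (α - 1) * (Real.exp (-(s * t)) - Real.exp (-(s * x (i + 1))))|)
        ≤ ∫ t in x i..x (i + 1), t ^ (α - 1) * (T * h) :=
          intervalIntegral.integral_mono_on hle hint1 hint2 hbound
      _ = w (i + 1) * (T * h) := by
          rw [intervalIntegral.integral_mul_const, hwint i]
  -- tail at zero
  have hIoc0a : IntegrableOn (f s) (Ioc 0 a) := hInt.mono_set Ioc_subset_Ioi_self
  have htail0 : ∫ θ in Ioc 0 a, f s θ ≤ δ / 3 := by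
    have hintr : IntegrableOn (fun t : ℝ => t ^ (α - 1)) (Ioc 0 a) :=
      (intervalIntegrable_iff_integrableOn_Ioc_of_le hapos.le).mp (hrint 0 a)
    have hmono : ∫ θ in Ioc 0 a, f s θ ≤ ∫ θ in Ioc 0 a, θ ^ (α - 1) := by
      refine setIntegral_mono_on hIoc0a hintr measurableSet_Ioc fun t ht => ?_
      rw [hfdef]
      have : Real.exp (-(s * t)) ≤ 1 :=
        Real.exp_le_one_iff.mpr (by nlinarith [ht.1, hs0])
      calc t ^ (α - 1) * Real.exp (-(s * t)) ≤ t ^ (α - 1) * 1 :=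
            mul_le_mul_of_nonneg_left this (Real.rpow_nonneg ht.1.le _)
        _ = t ^ (α - 1) := mul_one _
    have hval : ∫ θ in Ioc 0 a, θ ^ (α - 1) = a ^ α / α := by
      rw [← intervalIntegral.integral_of_le hapos.le, integral_rpow (Or.inl (by linarith))]
      have h1 : α - 1 + 1 = α := by ring
      rw [h1, Real.zero_rpow hα0.ne']
      ring
    calc ∫ θ in Ioc 0 a, f s θ ≤ a ^ α / α := hval ▸ hmono
      _ ≤ δ / 3 := haε
  have htail0' : 0 ≤ ∫ θ in Ioc 0 a, f s θ :=
    setIntegral_nonneg measurableSet_Ioc fun t ht => hfnonneg s t ht.1.le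
  -- tail at infinity
  have hIoib : IntegrableOn (f s) (Ioi b) := hInt.mono_set (Ioi_subset_Ioi hbpos.le)
  have htailinf : ∫ θ in Ioi b, f s θ ≤ δ / 3 := by
    have hgb : IntegrableOn (fun θ : ℝ => Real.exp (-(Δt * b) / 2) * f (Δt / 2) θ) (Ioi b) :=
      (hgInt.mono_set (Ioi_subset_Ioi hbpos.le)).const_mul _
    have hmono : ∫ θ in Ioi b, f s θ ≤
        ∫ θ in Ioi b, Real.exp (-(Δt * b) / 2) * f (Δt / 2) θ := by
      refine setIntegral_mono_on hIoib hgb measurableSet_Ioi fun t ht => ?_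
      have htb : b < t := ht
      have htpos : 0 < t := hbpos.trans htb
      rw [hfdef]
      simp only
      have h1 : Real.exp (-(s * t)) ≤
          Real.exp (-(Δt * b) / 2) * Real.exp (-(Δt / 2 * t)) := by
        rw [← Real.exp_add]
        apply Real.exp_le_exp.2
        nlinarith [mul_le_mul_of_nonneg_right hs1 htpos.le]
      calc t ^ (α - 1) * Real.exp (-(s * t))
          ≤ t ^ (α - 1) * (Real.exp (-(Δt * b) / 2) * Real.exp (-(Δt / 2 * t))) :=
            mul_le_mul_of_nonneg_left h1 (Real.rpow_nonneg htpos.le _)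
        _ = Real.exp (-(Δt * b) / 2) * (t ^ (α - 1) * Real.exp (-(Δt / 2 * t))) := by ring
    have hmono2 : ∫ θ in Ioi b, f (Δt / 2) θ ≤ ∫ θ in Ioi 0, f (Δt / 2) θ := by
      refine setIntegral_mono_set hgInt ?_ (HasSubset.Subset.eventuallyLE (Ioi_subset_Ioi hbpos.le))
      exact (ae_restrict_iff' measurableSet_Ioi).2 (Filter.Eventually.of_forall
        fun t ht => hfnonneg (Δt / 2) t (le_of_lt ht))
    calc ∫ θ in Ioi b, f s θ
        ≤ ∫ θ in Ioi b, Real.exp (-(Δt * b) / 2) * f (Δt / 2) θ := hmono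
      _ = Real.exp (-(Δt * b) / 2) * ∫ θ in Ioi b, f (Δt / 2) θ := integral_const_mul _ _
      _ ≤ Real.exp (-(Δt * b) / 2) * ∫ θ in Ioi 0, f (Δt / 2) θ :=
          mul_le_mul_of_nonneg_left hmono2 (Real.exp_pos _).le
      _ = Real.exp (-(Δt * b) / 2) * K := by rw [hKval]
      _ ≤ δ / 3 := hbtail
  have htailinf' : 0 ≤ ∫ θ in Ioi b, f s θ :=
    setIntegral_nonneg measurableSet_Ioi fun t ht => hfnonneg s t (hbpos.trans ht).le
  -- splitting the integral
  have hsplit : ∫ θ in Ioi 0, f s θ =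
      (∫ θ in Ioc 0 a, f s θ) + (∫ t in a..b, f s t) + ∫ θ in Ioi b, f s θ := by
    have hIab : IntegrableOn (f s) (Ioc a b) :=
      hInt.mono_set (fun t ht => lt_trans hapos ht.1)
    have hIocb : IntegrableOn (f s) (Ioc 0 b) := hInt.mono_set Ioc_subset_Ioi_self
    rw [← Ioc_union_Ioi_eq_Ioi hbpos.le,
      setIntegral_union Ioc_disjoint_Ioi_same measurableSet_Ioi hIocb hIoib,
      ← Ioc_union_Ioc_eq_Ioc hapos.le hba.le,
      setIntegral_union (Ioc_disjoint_Ioc_of_le le_rfl) measurableSet_Ioc hIoc0a hIab,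
      intervalIntegral.integral_of_le hba.le]
  -- adjacent intervals
  have hadj : ∑ i ∈ Finset.range N, ∫ t in x i..x (i + 1), f s t = ∫ t in a..b, f s t := by
    have h1 := intervalIntegral.sum_integral_adjacent_intervals (μ := volume) (a := x) (n := N)
      (fun k _ => hFint k)
    rwa [hx0, hxN] at h1
  -- the sum over Icc as a sum over range
  have hsum : ∑ ℓ ∈ Finset.Icc 1 N, (w ℓ / C) * Real.exp (-(x ℓ) * s)
      = (∑ i ∈ Finset.range N, w (i + 1) * Real.exp (-(s * x (i + 1)))) / C := by
    rw [← Finset.Ico_add_one_right_eq_Icc, Finset.sum_Ico_eq_sum_range]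
    rw [Finset.sum_div]
    refine Finset.sum_congr rfl fun i _ => ?_
    rw [add_comm 1 i]
    have harg : -(x (i + 1)) * s = -(s * x (i + 1)) := by ring
    rw [harg]
    ring
  -- putting things together
  set S : ℝ := ∑ i ∈ Finset.range N,
    ((∫ t in x i..x (i + 1), f s t) - w (i + 1) * Real.exp (-(s * x (i + 1)))) with hSdef
  have hSabs : |S| ≤ δ / 3 := by
    have h1 : |S| ≤ ∑ i ∈ Finset.range N,
        |(∫ t in x i..x (i + 1), f s t) - w (i + 1) * Real.exp (-(s * x (i + 1)))| :=
      Finset.abs_sum_le_sum_abs _ _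
    have h2 : ∑ i ∈ Finset.range N,
        |(∫ t in x i..x (i + 1), f s t) - w (i + 1) * Real.exp (-(s * x (i + 1)))|
        ≤ ∑ i ∈ Finset.range N, w (i + 1) * (T * h) :=
      Finset.sum_le_sum fun i _ => hcell i
    have h3 : ∑ i ∈ Finset.range N, w (i + 1) * (T * h)
        = (b ^ α / α - a ^ α / α) * (T * h) := by
      rw [← Finset.sum_mul, hwsum]
    have h4 : (b ^ α / α - a ^ α / α) * (T * h) ≤ δ / 3 := by
      have ha0 : 0 ≤ a ^ α / α := by positivity
      have hTh : 0 ≤ T * h := mul_nonneg hT.le hhpos.le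
      calc (b ^ α / α - a ^ α / α) * (T * h) ≤ b ^ α / α * (T * h) := by nlinarith
        _ = T * h * b ^ α / α := by ring
        _ ≤ δ / 3 := hNineq
    linarith
  have hfinal : omega (1 - α) s - ∑ ℓ ∈ Finset.Icc 1 N, (w ℓ / C) * Real.exp (-(x ℓ) * s)
      = ((∫ θ in Ioc 0 a, f s θ) + (∫ θ in Ioi b, f s θ) + S) / C := by
    rw [homega, hsum, hsplit, div_sub_div_same]
    congr 1
    rw [hSdef, Finset.sum_sub_distrib, hadj]
    ring
  rw [hfinal, abs_div, abs_of_pos hCpos, div_le_iff₀ hCpos]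
  have habs3 : |(∫ θ in Ioc 0 a, f s θ) + (∫ θ in Ioi b, f s θ) + S|
      ≤ |∫ θ in Ioc 0 a, f s θ| + |∫ θ in Ioi b, f s θ| + |S| := by
    calc |(∫ θ in Ioc 0 a, f s θ) + (∫ θ in Ioi b, f s θ) + S|
        ≤ |(∫ θ in Ioc 0 a, f s θ) + (∫ θ in Ioi b, f s θ)| + |S| := abs_add_le _ _
      _ ≤ |∫ θ in Ioc 0 a, f s θ| + |∫ θ in Ioi b, f s θ| + |S| := by
          linarith [abs_add_le (∫ θ in Ioc 0 a, f s θ) (∫ θ in Ioi b, f s θ)]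
  have e1 : |∫ θ in Ioc 0 a, f s θ| ≤ δ / 3 := by rw [abs_of_nonneg htail0']; exact htail0
  have e2 : |∫ θ in Ioi b, f s θ| ≤ δ / 3 := by rw [abs_of_nonneg htailinf']; exact htailinf
  have : ε * C = δ := hδdef.symm
  linarith
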